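/- arXiv:2410.10691 — 2 statements merged into one kernel-verified Lean document; each statement's English description precedes it below -/
import Mathlib

section
/- Common factor of tree weights sharing a path: let Γ ∈ M(i,j) be a minimal path from i to j and T(Γ) = {T ∈ Θ_j : T_i = Γ}. Then q(T(Γ)) := ∑_{T ∈ T(Γ)} q(T) = q(Γ) · α, and moreover for the reversed path Γ̂ ∈ M(j,i) and T(Γ̂) = {Φ_{j,i}(T) : T ∈ T(Γ)} ⊆ Θ_i, one has ∑_{T' ∈ T(Γ̂)} q(T') = q(Γ̂) · α for the same constant α ≥ 0. -/
open Finset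

attribute [local instance] Classical.propDecidable

/-- `i → j` is an edge of the graph when its label is positive. -/
def IsEdge {n : ℕ} (ℓ : Fin n → Fin n → ℝ) (i j : Fin n) : Prop := 0 < ℓ i j

/-- Strong connectivity: any two vertices are joined by a directed path of edges. -/
def StronglyConnected {n : ℕ} (ℓ : Fin n → Fin n → ℝ) : Prop :=
  ∀ i j : Fin n, Relation.ReflTransGen (IsEdge ℓ) i j

/-- Reversibility: `i → j` is an edge iff `j → i` is. -/
def Reversible {n : ℕ} (ℓ : Fin n → Fin n → ℝ) : Prop :=
  ∀ i j : Fin n, 0 < ℓ i j ↔ 0 < ℓ j i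

/-- The Laplacian matrix: `L j i = ℓ i j` off the diagonal,
`L i i = -∑_{k ≠ i} ℓ i k`. -/
noncomputable def labelLaplacian {n : ℕ} (ℓ : Fin n → Fin n → ℝ) :
    Matrix (Fin n) (Fin n) ℝ :=
  fun j i => if j = i then -∑ k ∈ univ.filter (· ≠ i), ℓ i k else ℓ i j

/-- A spanning tree rooted at `r`, encoded as a parent map `t`: the root is fixed,
every other vertex has a positively-labelled edge to its parent, and iterating
the parent map from any vertex reaches the root. -/
def IsSpanningTree {n : ℕ} (ℓ : Fin n → Fin n → ℝ) (r : Fin n)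
    (t : Fin n → Fin n) : Prop :=
  t r = r ∧ (∀ v, v ≠ r → 0 < ℓ v (t v)) ∧ ∀ v, ∃ k, t^[k] v = r

/-- `Θ_r`: the set of spanning trees rooted at `r`. -/
noncomputable def Trees {n : ℕ} (ℓ : Fin n → Fin n → ℝ) (r : Fin n) :
    Finset (Fin n → Fin n) :=
  univ.filter (IsSpanningTree ℓ r)

/-- `q(T)`: the product of the edge labels over the edges of the tree. -/
noncomputable def treeWeight {n : ℕ} (ℓ : Fin n → Fin n → ℝ) (r : Fin n)
    (t : Fin n → Fin n) : ℝ :=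
  ∏ v ∈ univ.filter (· ≠ r), ℓ v (t v)

/-- A directed path from `i` to `j`, as the list of visited vertices. -/
def IsPathFrom {n : ℕ} (ℓ : Fin n → Fin n → ℝ) (i j : Fin n)
    (p : List (Fin n)) : Prop :=
  p.Chain' (IsEdge ℓ) ∧ p.head? = some i ∧ p.getLast? = some j

/-- A minimal (self-avoiding) path from `i` to `j`: all vertices distinct. -/
def IsMinPathFrom {n : ℕ} (ℓ : Fin n → Fin n → ℝ) (i j : Fin n)
    (p : List (Fin n)) : Prop :=
  IsPathFrom ℓ i j p ∧ p.Nodup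

/-- `S(P)`: the action / entropy change of a path, the sum of
`log (ℓ(a→b)/ℓ(b→a))` over its consecutive pairs `a → b`. -/
noncomputable def pathAction {n : ℕ} (ℓ : Fin n → Fin n → ℝ)
    (p : List (Fin n)) : ℝ :=
  ((p.zip p.tail).map (fun e => Real.log (ℓ e.1 e.2 / ℓ e.2 e.1))).sum

/-- `q(P)`: the product of the labels over the edges of a path. -/
noncomputable def pathWeight {n : ℕ} (ℓ : Fin n → Fin n → ℝ)
    (p : List (Fin n)) : ℝ :=
  ((p.zip p.tail).map (fun e => ℓ e.1 e.2)).prod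

/-- The path from `i` to the root `r` along the parent map `t` (fuel `k`). -/
def treePathAux {n : ℕ} (t : Fin n → Fin n) (r : Fin n) :
    ℕ → Fin n → List (Fin n)
  | 0, i => [i]
  | k + 1, i => if i = r then [i] else i :: treePathAux t r k (t i)

/-- `T_i`: the unique path from `i` to the root `r` on the spanning tree `t`. -/
def treePath {n : ℕ} (t : Fin n → Fin n) (r : Fin n) (i : Fin n) :
    List (Fin n) :=
  treePathAux t r n i

/-- The cycle condition: `S(C) = 0` for every directed cycle `C`
(a directed path whose first and last vertices agree). -/
def CycleCondition {n : ℕ} (ℓ : Fin n → Fin n → ℝ) : Prop :=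
  ∀ p : List (Fin n), p.Chain' (IsEdge ℓ) → p.head? = p.getLast? →
    pathAction ℓ p = 0

/-- The tree-reversal map `Φ_{r,j}`: given a tree `t` rooted at `r`, reverse the
edges on the unique tree path from `j` to `r`, obtaining a tree rooted at `j`. -/
def reverseTree {n : ℕ} (t : Fin n → Fin n) (r j : Fin n) : Fin n → Fin n :=
  fun v =>
    (((treePath t r j).zip (treePath t r j).tail).find? (fun e => e.2 == v)).elim
      (if v = j then j else t v) (fun e => e.1)

section AuxLemmas

variable {α : Type*}

lemma zipTail_map_fst : ∀ (l : List α), (l.zip l.tail).map Prod.fst = l.dropLast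
  | [] => by simp
  | [_] => by simp
  | a :: b :: m => by
    have ih := zipTail_map_fst (b :: m)
    simp only [List.tail_cons] at ih ⊢
    simp only [List.zip_cons_cons, List.map_cons, List.dropLast_cons₂]
    rw [ih]

lemma zipTail_map_snd (l : List α) : (l.zip l.tail).map Prod.snd = l.tail :=
  List.map_snd_zip (by cases l <;> simp)

lemma chain'_pairs {R : α → α → Prop} :
    ∀ {l : List α}, l.Chain' R → ∀ e ∈ l.zip l.tail, R e.1 e.2
  | [], _, e, he => by simp at he
  | [_], _, e, he => by simp at he
  | a :: b :: m, h, e, he => by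
    simp only [List.Chain', List.isChain_cons_cons] at h
    simp only [List.tail_cons, List.zip_cons_cons, List.mem_cons] at he
    rcases he with rfl | he
    · exact h.1
    · exact chain'_pairs h.2 e he

lemma zipTail_append : ∀ (l : List α) (x : α),
    (l ++ [x]).zip (l ++ [x]).tail
      = l.zip l.tail ++ (l.getLast?.elim [] fun a => [(a, x)])
  | [], x => by simp
  | [a], x => by simp
  | a :: b :: m, x => by
    have ih := zipTail_append (b :: m) x
    simp only [List.cons_append, List.tail_cons, List.zip_cons_cons] at ih ⊢
    rw [ih]
    simp [List.getLast?]

lemma pathWeight_append {n : ℕ} (ℓ : Fin n → Fin n → ℝ) (l : List (Fin n)) (x : Fin n) :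
    pathWeight ℓ (l ++ [x]) = pathWeight ℓ l * (l.getLast?.elim 1 fun a => ℓ a x) := by
  unfold pathWeight
  rw [zipTail_append]
  cases h : l.getLast? <;> simp [h]

lemma pathWeight_reverse {n : ℕ} (ℓ : Fin n → Fin n → ℝ) :
    ∀ l : List (Fin n),
      pathWeight ℓ l.reverse = ((l.zip l.tail).map fun e => ℓ e.2 e.1).prod
  | [] => by simp [pathWeight]
  | a :: m => by
    have ih := pathWeight_reverse ℓ m
    rw [List.reverse_cons, pathWeight_append, ih, List.getLast?_reverse]
    cases m with
    | nil => simp [pathWeight]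
    | cons b m' => simp [mul_comm]

lemma treePathAux_head {n : ℕ} (t : Fin n → Fin n) (r : Fin n) :
    ∀ (k : ℕ) (i : Fin n), (treePathAux t r k i).head? = some i
  | 0, i => rfl
  | k + 1, i => by
    simp only [treePathAux]
    split <;> rfl

lemma treePathAux_chain {n : ℕ} (t : Fin n → Fin n) (r : Fin n) :
    ∀ (k : ℕ) (i : Fin n), (treePathAux t r k i).Chain' (fun a b => t a = b)
  | 0, i => by simp [treePathAux, List.Chain']
  | k + 1, i => by
    simp only [treePathAux]
    split
    · simp [List.Chain']
    · simp only [List.Chain']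
      rw [List.isChain_cons]
      refine ⟨?_, treePathAux_chain t r k (t i)⟩
      intro y hy
      rw [treePathAux_head] at hy
      simp at hy
      exact hy

end AuxLemmas

/-- Common factor of tree weights sharing a path: for a minimal path `Γ` from
`i` to `j`, `q(T(Γ)) = q(Γ)·α` and `q(T(Γ̂)) = q(Γ̂)·α` for the same `α ≥ 0`,
where `T(Γ) = {T ∈ Θ_j : T_i = Γ}` and `T(Γ̂)` is its image under the
tree-reversal bijection `Φ_{j,i}`. -/
theorem common_factor_tree_weights {n : ℕ} (ℓ : Fin n → Fin n → ℝ)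
    (hℓ : ∀ i j, 0 ≤ ℓ i j) (hsc : StronglyConnected ℓ) (hrev : Reversible ℓ)
    (i j : Fin n) (hij : i ≠ j) (Γ : List (Fin n))
    (hΓ : IsMinPathFrom ℓ i j Γ) :
    ∃ α : ℝ, 0 ≤ α ∧
      (∑ T ∈ (Trees ℓ j).filter (fun T => treePath T j i = Γ),
          treeWeight ℓ j T) = pathWeight ℓ Γ * α ∧
      (∑ T' ∈ ((Trees ℓ j).filter (fun T => treePath T j i = Γ)).image
          (fun T => reverseTree T j i), treeWeight ℓ i T') =
        pathWeight ℓ Γ.reverse * α := by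
  classical
  obtain ⟨⟨hchain, hhead, hlast⟩, hnd⟩ := hΓ
  -- structure of Γ
  have hΓne : Γ ≠ [] := by rintro rfl; simp at hhead
  have hcons : Γ = i :: Γ.tail := by
    cases Γ with
    | nil => simp at hhead
    | cons a m => simp_all
  have hdl : Γ.dropLast ++ [j] = Γ := by
    have h1 : Γ.getLast hΓne = j := by
      rw [List.getLast?_eq_getLast hΓne] at hlast
      exact Option.some_inj.mp hlast
    rw [← h1]
    exact List.dropLast_append_getLast hΓne
  have hiΓ : i ∈ Γ := by rw [hcons]; exact List.mem_cons_self
  have hjΓ : j ∈ Γ := by rw [← hdl]; simp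
  have hitail : i ∉ Γ.tail := by
    have h := hnd; rw [hcons, List.nodup_cons] at h; exact h.1
  have hjdl : j ∉ Γ.dropLast := by
    have h := hnd
    rw [← hdl, List.nodup_append] at h
    intro hm
    exact h.2.2 j hm j (by simp) rfl
  have hdlnd : Γ.dropLast.Nodup := hnd.sublist (List.dropLast_sublist _)
  have htlnd : Γ.tail.Nodup := hnd.sublist (List.tail_sublist _)
  -- membership facts about the edge list of Γ
  have hsndmem : ∀ e ∈ Γ.zip Γ.tail, e.2 ∈ Γ.tail := by
    intro e he
    rw [← zipTail_map_snd Γ]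
    exact List.mem_map_of_mem he
  -- tree facts
  have hpairT : ∀ T : Fin n → Fin n, treePath T j i = Γ →
      ∀ e ∈ Γ.zip Γ.tail, T e.1 = e.2 := by
    intro T hTP e he
    have h := treePathAux_chain T j n i
    rw [show treePathAux T j n i = Γ from hTP] at h
    exact chain'_pairs h e he
  -- values of the reversed tree
  have hΦout : ∀ T : Fin n → Fin n, treePath T j i = Γ →
      ∀ v, v ∉ Γ → reverseTree T j i v = T v := by
    intro T hTP v hv
    have hfind : (Γ.zip Γ.tail).find? (fun e => e.2 == v) = none := by
      rw [List.find?_eq_none]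
      intro e he
      simp only [beq_iff_eq]
      intro h
      exact hv (List.mem_of_mem_tail (h ▸ hsndmem e he))
    show (((treePath T j i).zip (treePath T j i).tail).find? (fun p => p.2 == v)).elim
      (if v = i then i else T v) (fun p => p.1) = T v
    unfold treePath
    rw [show treePathAux T j n i = Γ from hTP, hfind]
    simp only [Option.elim_none]
    rw [if_neg (fun h : v = i => hv (by rw [h]; exact hiΓ))]
  have hΦpair : ∀ T : Fin n → Fin n, treePath T j i = Γ →
      ∀ e ∈ Γ.zip Γ.tail, reverseTree T j i e.2 = e.1 := by
    intro T hTP e he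
    have hex : ∃ e' ∈ Γ.zip Γ.tail, (fun e' => e'.2 == e.2) e' = true := ⟨e, he, by simp⟩
    obtain ⟨e', hfind⟩ := Option.isSome_iff_exists.mp (List.find?_isSome.mpr hex)
    have he'mem := List.mem_of_find?_eq_some hfind
    have he'2 : e'.2 = e.2 := by
      have := List.find?_some hfind
      simpa using this
    have hnodupmap : ((Γ.zip Γ.tail).map Prod.snd).Nodup := by
      rw [zipTail_map_snd]; exact htlnd
    have he'e : e' = e :=
      List.inj_on_of_nodup_map hnodupmap he'mem he he'2
    show (((treePath T j i).zip (treePath T j i).tail).find? (fun p => p.2 == e.2)).elim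
      (if e.2 = i then i else T e.2) (fun p => p.1) = e.1
    unfold treePath
    rw [show treePathAux T j n i = Γ from hTP, hfind, he'e]
    rfl
  -- weight of a tree in the family
  set w : (Fin n → Fin n) → ℝ := fun T => ∏ v ∈ univ.filter (fun v => v ∉ Γ), ℓ v (T v)
    with hw
  set S := (Trees ℓ j).filter (fun T => treePath T j i = Γ) with hS
  have hmemS : ∀ T ∈ S, IsSpanningTree ℓ j T ∧ treePath T j i = Γ := by
    intro T hT
    rw [hS, Finset.mem_filter] at hT
    refine ⟨?_, hT.2⟩
    have := hT.1
    rw [Trees, Finset.mem_filter] at this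
    exact this.2
  -- first identity per tree
  have key1 : ∀ T ∈ S, treeWeight ℓ j T = pathWeight ℓ Γ * w T := by
    intro T hT
    obtain ⟨hsp, hTP⟩ := hmemS T hT
    have hsplit := Finset.prod_filter_mul_prod_filter_not
      (univ.filter (· ≠ j)) (fun v => v ∈ Γ) (fun v => ℓ v (T v))
    rw [Finset.filter_filter, Finset.filter_filter] at hsplit
    have hset1 : univ.filter (fun v => v ≠ j ∧ v ∈ Γ) = Γ.dropLast.toFinset := by
      ext v
      simp only [Finset.mem_filter, Finset.mem_univ, true_and, List.mem_toFinset]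
      constructor
      · rintro ⟨hvj, hvΓ⟩
        rw [← hdl, List.mem_append] at hvΓ
        rcases hvΓ with h | h
        · exact h
        · exact absurd (by simpa using h) hvj
      · intro hv
        exact ⟨fun h => hjdl (h ▸ hv), by rw [← hdl]; exact List.mem_append_left _ hv⟩
    have hset2 : univ.filter (fun v => v ≠ j ∧ v ∉ Γ) = univ.filter (fun v => v ∉ Γ) := by
      ext v
      simp only [Finset.mem_filter, Finset.mem_univ, true_and, and_iff_right_iff_imp]
      intro hv h
      exact hv (h ▸ hjΓ)
    rw [hset1, hset2] at hsplit
    have hprod1 : ∏ v ∈ Γ.dropLast.toFinset, ℓ v (T v) = pathWeight ℓ Γ := by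
      rw [List.prod_toFinset _ hdlnd, ← zipTail_map_fst Γ, List.map_map]
      unfold pathWeight
      congr 1
      apply List.map_congr_left
      intro e he
      simp only [Function.comp]
      rw [hpairT T hTP e he]
    rw [treeWeight, ← hsplit, hprod1, hw]
  -- second identity per tree
  have key2 : ∀ T ∈ S, treeWeight ℓ i (reverseTree T j i) = pathWeight ℓ Γ.reverse * w T := by
    intro T hT
    obtain ⟨hsp, hTP⟩ := hmemS T hT
    have hsplit := Finset.prod_filter_mul_prod_filter_not
      (univ.filter (· ≠ i)) (fun v => v ∈ Γ) (fun v => ℓ v (reverseTree T j i v))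
    rw [Finset.filter_filter, Finset.filter_filter] at hsplit
    have hset1 : univ.filter (fun v => v ≠ i ∧ v ∈ Γ) = Γ.tail.toFinset := by
      ext v
      simp only [Finset.mem_filter, Finset.mem_univ, true_and, List.mem_toFinset]
      constructor
      · rintro ⟨hvi, hvΓ⟩
        rw [hcons, List.mem_cons] at hvΓ
        rcases hvΓ with h | h
        · exact absurd h hvi
        · exact h
      · intro hv
        exact ⟨fun h => hitail (h ▸ hv), by rw [hcons]; exact List.mem_cons_of_mem _ hv⟩
    have hset2 : univ.filter (fun v => v ≠ i ∧ v ∉ Γ) = univ.filter (fun v => v ∉ Γ) := by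
      ext v
      simp only [Finset.mem_filter, Finset.mem_univ, true_and, and_iff_right_iff_imp]
      intro hv h
      exact hv (h ▸ hiΓ)
    rw [hset1, hset2] at hsplit
    have hprod1 : ∏ v ∈ Γ.tail.toFinset, ℓ v (reverseTree T j i v)
        = pathWeight ℓ Γ.reverse := by
      rw [List.prod_toFinset _ htlnd, ← zipTail_map_snd Γ, List.map_map,
        pathWeight_reverse]
      apply congrArg
      apply List.map_congr_left
      intro e he
      simp only [Function.comp]
      rw [hΦpair T hTP e he]
    have hprod2 : ∏ v ∈ univ.filter (fun v => v ∉ Γ), ℓ v (reverseTree T j i v) = w T := by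
      rw [hw]
      apply Finset.prod_congr rfl
      intro v hv
      rw [Finset.mem_filter] at hv
      rw [hΦout T hTP v hv.2]
    rw [treeWeight, ← hsplit, hprod1, hprod2]
  -- injectivity of the reversal map on S
  have hinj : ∀ T₁ ∈ S, ∀ T₂ ∈ S, reverseTree T₁ j i = reverseTree T₂ j i → T₁ = T₂ := by
    intro T₁ h₁ T₂ h₂ h
    obtain ⟨hsp₁, hTP₁⟩ := hmemS T₁ h₁
    obtain ⟨hsp₂, hTP₂⟩ := hmemS T₂ h₂
    funext v
    by_cases hv : v ∈ Γ
    · by_cases hvj : v = j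
      · rw [hvj, hsp₁.1, hsp₂.1]
      · have hvd : v ∈ Γ.dropLast := by
          rw [← hdl, List.mem_append] at hv
          rcases hv with h' | h'
          · exact h'
          · exact absurd (by simpa using h') hvj
        rw [← zipTail_map_fst Γ] at hvd
        obtain ⟨e, he, he1⟩ := List.mem_map.mp hvd
        rw [← he1, hpairT T₁ hTP₁ e he, hpairT T₂ hTP₂ e he]
    · rw [← hΦout T₁ hTP₁ v hv, ← hΦout T₂ hTP₂ v hv, h]
  -- assemble
  refine ⟨∑ T ∈ S, w T, ?_, ?_, ?_⟩
  · apply Finset.sum_nonneg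
    intro T _
    exact Finset.prod_nonneg fun v _ => hℓ _ _
  · rw [Finset.mul_sum]
    exact Finset.sum_congr rfl key1
  · rw [Finset.sum_image hinj, Finset.mul_sum]
    exact Finset.sum_congr rfl key2
end

section
/- Equilibrium time-reversal symmetry of loop-erased path probabilities: if G is a finite strongly connected reversible graph satisfying the cycle condition, then for every minimal path Γ ∈ M(i,j), Pr(Γ) = Pr(Γ̂), where Pr(Γ) = ∑_{T ∈ Θ_j, T_i = Γ} q(T)/q(Θ_j) and Pr(Γ̂) = ∑_{T' ∈ Θ_i, T'_j = Γ̂} q(T')/q(Θ_i). -/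
open Finset

attribute [local instance] Classical.propDecidable

/-- The Laplacian matrix: `L j i = ℓ i j` off the diagonal,
`L i i = -∑_{k ≠ i} ℓ i k`. -/
noncomputable def LaplacianMatrix {n : ℕ} (ℓ : Fin n → Fin n → ℝ) :
    Matrix (Fin n) (Fin n) ℝ :=
  fun j i => if j = i then -∑ k ∈ univ.filter (· ≠ i), ℓ i k else ℓ i j

section Aux

variable {n : ℕ}

lemma prod_list_range (f : ℕ → ℝ) (N : ℕ) :
    ((List.range N).map f).prod = ∏ k ∈ Finset.range N, f k := by
  induction N with
  | zero => simp
  | succ N ih => rw [List.range_succ, Finset.prod_range_succ, List.map_append, List.prod_append, ih]; simp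

lemma sum_list_range (f : ℕ → ℝ) (N : ℕ) :
    ((List.range N).map f).sum = ∑ k ∈ Finset.range N, f k := by
  induction N with
  | zero => simp
  | succ N ih => rw [List.range_succ, Finset.sum_range_succ, List.map_append, List.sum_append, ih]; simp

lemma list_eq_map_range {α : Type*} (l : List α) (d : α) :
    l = (List.range l.length).map (fun k => l.getD k d) := by
  apply List.ext_getElem (by simp)
  intro k h1 h2
  simp only [List.getElem_map, List.getElem_range]
  exact (List.getD_eq_getElem _ _ h1).symm

lemma reverse_map_range {α : Type*} (u : ℕ → α) (N : ℕ) :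
    ((List.range (N+1)).map u).reverse = (List.range (N+1)).map (fun k => u (N - k)) := by
  apply List.ext_getElem (by simp)
  intro k h1 h2
  simp at h1 h2
  rw [List.getElem_reverse]
  simp only [List.getElem_map, List.getElem_range, List.length_map, List.length_range]
  have h3 : N + 1 - 1 - k = N - k := by omega
  rw [h3]

lemma map_range_succ_succ {α : Type*} (u : ℕ → α) (N : ℕ) :
    (List.range (N+1+1)).map u = u 0 :: (List.range (N+1)).map (fun k => u (k+1)) := by
  rw [List.range_succ_eq_map, List.map_cons, List.map_map]
  rfl

lemma head?_map_range {α : Type*} (u : ℕ → α) (N : ℕ) :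
    ((List.range (N+1)).map u).head? = some (u 0) := by
  simp [List.range_succ_eq_map]

lemma getLast?_map_range {α : Type*} (u : ℕ → α) (N : ℕ) :
    ((List.range (N+1)).map u).getLast? = some (u N) := by
  rw [← List.head?_reverse, reverse_map_range]
  simpa using head?_map_range (fun k => u (N - k)) N

lemma zip_tail_map_range {α : Type*} (N : ℕ) (u : ℕ → α) :
    ((List.range (N+1)).map u).zip ((List.range (N+1)).map u).tail
      = (List.range N).map (fun k => (u k, u (k+1))) := by
  apply List.ext_getElem (by simp)
  intro k h1 h2
  simp at h1 h2
  have h3 : k < ((List.range (N+1)).map u).length := by simpa using by omega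
  have h4 : k < ((List.range (N+1)).map u).tail.length := by simp; omega
  rw [List.getElem_zip]
  simp [List.getElem_tail]

lemma pathWeight_map_range (ℓ : Fin n → Fin n → ℝ) (N : ℕ) (u : ℕ → Fin n) :
    pathWeight ℓ ((List.range (N+1)).map u) = ∏ k ∈ Finset.range N, ℓ (u k) (u (k+1)) := by
  rw [pathWeight, zip_tail_map_range, List.map_map, ← prod_list_range]
  rfl

lemma pathAction_map_range (ℓ : Fin n → Fin n → ℝ) (N : ℕ) (u : ℕ → Fin n) :
    pathAction ℓ ((List.range (N+1)).map u)
      = ∑ k ∈ Finset.range N, Real.log (ℓ (u k) (u (k+1)) / ℓ (u (k+1)) (u k)) := by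
  rw [pathAction, zip_tail_map_range, List.map_map, ← sum_list_range]
  rfl

lemma chain'_map_range {α : Type*} (R : α → α → Prop) (N : ℕ) (u : ℕ → α) :
    ((List.range (N+1)).map u).Chain' R ↔ ∀ k < N, R (u k) (u (k+1)) := by
  rw [List.Chain', List.isChain_iff_getElem]
  constructor
  · intro h k hk
    have := h k (by simpa using hk)
    simpa using this
  · intro h k hk
    simp at hk ⊢
    exact h k hk

end Aux
section TreePathSpec

variable {n : ℕ} {t : Fin n → Fin n} {r : Fin n}

/-- distance to root -/
noncomputable def tdist (ht : ∀ v, ∃ k, t^[k] v = r) (v : Fin n) : ℕ :=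
  Nat.find (ht v)

lemma tdist_spec (ht : ∀ v, ∃ k, t^[k] v = r) (v : Fin n) :
    t^[tdist ht v] v = r := Nat.find_spec (ht v)

lemma tdist_min (ht : ∀ v, ∃ k, t^[k] v = r) (v : Fin n) {k : ℕ}
    (hk : k < tdist ht v) : t^[k] v ≠ r := Nat.find_min (ht v) hk

lemma tdist_eq_zero (ht : ∀ v, ∃ k, t^[k] v = r) : tdist ht r = 0 := by
  have : t^[0] r = r := rfl
  exact Nat.eq_zero_of_le_zero (Nat.find_le this)

lemma tdist_succ (ht : ∀ v, ∃ k, t^[k] v = r) {v : Fin n} (hv : v ≠ r) :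
    tdist ht v = tdist ht (t v) + 1 := by
  have h0 : tdist ht v ≠ 0 := by
    intro h
    exact hv (by simpa [h] using tdist_spec ht v)
  have h1 : t^[tdist ht v - 1] (t v) = r := by
    have h2 : tdist ht v - 1 + 1 = tdist ht v := by omega
    have := tdist_spec ht v
    rw [← h2, Function.iterate_succ_apply] at this
    exact this
  have h2 : tdist ht (t v) ≤ tdist ht v - 1 := Nat.find_le h1
  have h3 : ¬ tdist ht (t v) < tdist ht v - 1 := by
    intro h
    have : t^[tdist ht (t v) + 1] v = r := by
      rw [Function.iterate_succ_apply]
      exact tdist_spec ht (t v)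
    exact tdist_min ht v (by omega) this
  omega

lemma tdist_inj (ht : ∀ v, ∃ k, t^[k] v = r) (v : Fin n) :
    ∀ a ≤ tdist ht v, ∀ b ≤ tdist ht v, t^[a] v = t^[b] v → a = b := by
  have key : ∀ a b, a < b → b ≤ tdist ht v → t^[a] v ≠ t^[b] v := by
    intro a b hab hb heq
    have : t^[tdist ht v - b + a] v = r := by
      have := tdist_spec ht v
      have h1 : t^[tdist ht v - b] (t^[a] v) = t^[tdist ht v - b] (t^[b] v) := by rw [heq]
      rw [← Function.iterate_add_apply, ← Function.iterate_add_apply] at h1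
      have h2 : tdist ht v - b + b = tdist ht v := by omega
      rw [h2] at h1
      rw [h1, this]
    exact tdist_min ht v (by omega) this
  intro a ha b hb heq
  rcases lt_trichotomy a b with h | h | h
  · exact absurd heq (key a b h hb)
  · exact h
  · exact absurd heq.symm (key b a h ha)

lemma tdist_lt (ht : ∀ v, ∃ k, t^[k] v = r) (v : Fin n) : tdist ht v < n := by
  have hinj : ∀ a ∈ Finset.range (tdist ht v + 1), ∀ b ∈ Finset.range (tdist ht v + 1),
      t^[a] v = t^[b] v → a = b := by
    intro a ha b hb
    simp at ha hb
    exact tdist_inj ht v a (by omega) b (by omega)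
  have := Finset.card_image_of_injOn (f := fun k => t^[k] v) (s := Finset.range (tdist ht v + 1)) hinj
  have hle := Finset.card_le_univ ((Finset.range (tdist ht v + 1)).image (fun k => t^[k] v))
  rw [this] at hle
  simp at hle
  have hn : 0 < n := Fin.pos_iff_nonempty.mpr ⟨v⟩
  omega

lemma treePathAux_eq (ht : ∀ v, ∃ k, t^[k] v = r) :
    ∀ (f : ℕ) (v : Fin n), tdist ht v ≤ f →
      treePathAux t r f v = (List.range (tdist ht v + 1)).map (fun k => t^[k] v) := by
  intro f
  induction f with
  | zero =>
      intro v hv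
      have h0 : tdist ht v = 0 := Nat.le_zero.mp hv
      rw [treePathAux, h0]
      simp
  | succ f ih =>
      intro v hv
      rw [treePathAux]
      by_cases hvr : v = r
      · subst hvr
        rw [if_pos rfl, tdist_eq_zero ht]
        simp
      · rw [if_neg hvr]
        have hs := tdist_succ ht (v := v) hvr
        rw [ih (t v) (by omega), hs]
        rw [map_range_succ_succ]
        rfl

lemma treePath_eq (ht : ∀ v, ∃ k, t^[k] v = r) (v : Fin n) :
    treePath t r v = (List.range (tdist ht v + 1)).map (fun k => t^[k] v) :=
  treePathAux_eq ht n v (le_of_lt (tdist_lt ht v))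

end TreePathSpec
section ReverseTree

variable {n : ℕ} {t : Fin n → Fin n} {r : Fin n}

lemma find?_unique {α : Type*} (p : α → Bool) (a : α) :
    ∀ (l : List α), a ∈ l → p a = true → (∀ x ∈ l, p x = true → x = a) →
      l.find? p = some a := by
  intro l
  induction l with
  | nil => simp
  | cons b l ih =>
      intro hmem hpa huniq
      by_cases hb : p b = true
      · rw [List.find?_cons_of_pos hb]
        rw [huniq b (by simp) hb]
      · rw [List.find?_cons_of_neg hb]
        have hab : a ≠ b := fun h => hb (h ▸ hpa)
        have : a ∈ l := by
          rcases List.mem_cons.mp hmem with h | h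
          · exact absurd h hab
          · exact h
        exact ih this hpa (fun x hx hpx => huniq x (List.mem_cons_of_mem _ hx) hpx)

lemma reverseTree_apply_mem (ht : ∀ v, ∃ k, t^[k] v = r) (j : Fin n) {k : ℕ}
    (hk : k < tdist ht j) :
    reverseTree t r j (t^[k+1] j) = t^[k] j := by
  rw [reverseTree, treePath_eq ht j, zip_tail_map_range]
  rw [List.find?_map]
  have hfind : (List.range (tdist ht j)).find?
      ((fun e => e.2 == t^[k+1] j) ∘ (fun k => (t^[k] j, t^[k+1] j))) = some k := by
    apply find?_unique
    · simpa using hk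
    · simp
    · intro x hx hpx
      simp at hx hpx
      have := tdist_inj ht j (x+1) (by omega) (k+1) (by omega) hpx
      omega
  rw [hfind]
  rfl

lemma reverseTree_apply_not_mem (ht : ∀ v, ∃ k, t^[k] v = r) (j : Fin n) {v : Fin n}
    (hv : ∀ k < tdist ht j, t^[k+1] j ≠ v) :
    reverseTree t r j v = if v = j then j else t v := by
  rw [reverseTree, treePath_eq ht j, zip_tail_map_range]
  rw [List.find?_map]
  have hfind : (List.range (tdist ht j)).find?
      ((fun e => e.2 == v) ∘ (fun k => (t^[k] j, t^[k+1] j))) = none := by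
    rw [List.find?_eq_none]
    intro x hx
    simp at hx ⊢
    exact hv x hx
  rw [hfind]
  rfl

lemma reverseTree_root (ht : ∀ v, ∃ k, t^[k] v = r) (j : Fin n) :
    reverseTree t r j j = j := by
  rw [reverseTree_apply_not_mem ht j, if_pos rfl]
  intro k hk heq
  have : t^[0] j = j := rfl
  have := tdist_inj ht j (k+1) (by omega) 0 (by omega) (by rw [heq]; rfl)
  omega

lemma tdist_ne_zero_root (ht : ∀ v, ∃ k, t^[k] v = r) {j : Fin n}
    (h : tdist ht j = 0) : j = r := by
  have := tdist_spec ht j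
  rw [h] at this
  exact this

lemma reach_path (ht : ∀ v, ∃ k, t^[k] v = r) (j : Fin n) :
    ∀ k ≤ tdist ht j, (reverseTree t r j)^[k] (t^[k] j) = j := by
  intro k
  induction k with
  | zero => intro _; rfl
  | succ k ih =>
      intro hk
      rw [Function.iterate_succ_apply, reverseTree_apply_mem ht j (by omega)]
      exact ih (by omega)

lemma reverseTree_isSpanningTree (ℓ : Fin n → Fin n → ℝ) (hrev : Reversible ℓ)
    (h : IsSpanningTree ℓ r t) (j : Fin n) :
    IsSpanningTree ℓ j (reverseTree t r j) := by
  obtain ⟨h1, h2, ht⟩ := h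
  refine ⟨reverseTree_root ht j, ?_, ?_⟩
  · -- edges
    intro v hv
    by_cases hmem : ∃ k < tdist ht j, t^[k+1] j = v
    · obtain ⟨k, hk, rfl⟩ := hmem
      rw [reverseTree_apply_mem ht j hk]
      have hkr : t^[k] j ≠ r := tdist_min ht j hk
      have := h2 _ hkr
      rw [← Function.iterate_succ_apply' t k j] at this
      exact (hrev _ _).mp this
    · push_neg at hmem
      rw [reverseTree_apply_not_mem ht j hmem, if_neg hv]
      apply h2
      intro hvr
      subst hvr
      rcases Nat.eq_zero_or_pos (tdist ht j) with h0 | h0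
      · have := tdist_ne_zero_root ht h0
        subst this
        exact hv rfl
      · have := hmem (tdist ht j - 1) (by omega)
        apply this
        have : tdist ht j - 1 + 1 = tdist ht j := by omega
        rw [this]
        exact tdist_spec ht j
  · -- reachability
    have main : ∀ d v, tdist ht v ≤ d → ∃ k, (reverseTree t r j)^[k] v = j := by
      intro d
      induction d with
      | zero =>
          intro v hv
          have hvr : v = r := tdist_ne_zero_root ht (Nat.le_zero.mp hv)
          subst hvr
          refine ⟨tdist ht j, ?_⟩
          have := reach_path ht j (tdist ht j) le_rfl
          rw [tdist_spec ht j] at this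
          exact this
      | succ d ih =>
          intro v hv
          by_cases hmem : ∃ k ≤ tdist ht j, t^[k] j = v
          · obtain ⟨k, hk, rfl⟩ := hmem
            exact ⟨k, reach_path ht j k hk⟩
          · push_neg at hmem
            have hvj : v ≠ j := by
              intro hvj
              exact hmem 0 (by omega) (by rw [hvj]; rfl)
            have hvr : v ≠ r := fun hvr => (hmem (tdist ht j) le_rfl)
              ((tdist_spec ht j).trans hvr.symm)
            have hΦ : reverseTree t r j v = t v := by
              rw [reverseTree_apply_not_mem ht j
                (fun k hk => hmem (k+1) (by omega)), if_neg hvj]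
            have hd : tdist ht (t v) ≤ d := by
              have := tdist_succ ht hvr
              omega
            obtain ⟨k, hk⟩ := ih (t v) hd
            refine ⟨k + 1, ?_⟩
            rw [Function.iterate_succ_apply, hΦ, hk]
    intro v
    exact main (tdist ht v) v le_rfl

lemma iterate_reverseTree (ht : ∀ v, ∃ k, t^[k] v = r) (j : Fin n) :
    ∀ k ≤ tdist ht j,
      (reverseTree t r j)^[k] (t^[tdist ht j] j) = t^[tdist ht j - k] j := by
  intro k
  induction k with
  | zero => intro _; simp
  | succ k ih =>
      intro hk
      rw [Function.iterate_succ_apply', ih (by omega)]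
      have h1 : tdist ht j - k = (tdist ht j - (k+1)) + 1 := by omega
      rw [h1, reverseTree_apply_mem ht j (by omega)]

lemma tdist_reverseTree (ht : ∀ v, ∃ k, t^[k] v = r) (j : Fin n)
    (ht' : ∀ v, ∃ k, (reverseTree t r j)^[k] v = j) :
    tdist ht' r = tdist ht j := by
  rw [tdist, Nat.find_eq_iff]
  constructor
  · have := iterate_reverseTree ht j (tdist ht j) le_rfl
    rw [tdist_spec ht j] at this
    simpa using this
  · intro k hk heq
    have h1 := iterate_reverseTree ht j k (by omega)
    rw [tdist_spec ht j] at h1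
    rw [h1] at heq
    have : t^[0] j = j := rfl
    have := tdist_inj ht j (tdist ht j - k) (by omega) 0 (by omega) (by rw [heq]; rfl)
    omega

lemma treePath_reverseTree (ht : ∀ v, ∃ k, t^[k] v = r) (j : Fin n)
    (ht' : ∀ v, ∃ k, (reverseTree t r j)^[k] v = j) :
    treePath (reverseTree t r j) j r = (treePath t r j).reverse := by
  rw [treePath_eq ht', tdist_reverseTree ht j ht', treePath_eq ht j, reverse_map_range]
  apply List.map_congr_left
  intro k hk
  simp at hk
  have := iterate_reverseTree ht j k (by omega)
  rw [tdist_spec ht j] at this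
  exact this

lemma reverseTree_involution (ℓ : Fin n → Fin n → ℝ) (hrev : Reversible ℓ)
    (h : IsSpanningTree ℓ r t) (j : Fin n) :
    reverseTree (reverseTree t r j) j r = t := by
  obtain ⟨h1, h2, ht⟩ := h
  have hΦ := reverseTree_isSpanningTree ℓ hrev ⟨h1, h2, ht⟩ j
  obtain ⟨g1, g2, ht'⟩ := hΦ
  have hm : tdist ht' r = tdist ht j := tdist_reverseTree ht j ht'
  have hiter : ∀ k ≤ tdist ht j, (reverseTree t r j)^[k] r = t^[tdist ht j - k] j := by
    intro k hk
    have := iterate_reverseTree ht j k hk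
    rw [tdist_spec ht j] at this
    exact this
  funext v
  by_cases hpath : ∃ a ≤ tdist ht j, t^[a] j = v
  · obtain ⟨a, ha, rfl⟩ := hpath
    rcases eq_or_lt_of_le ha with heq | hlt
    · -- a = tdist ht j, v = r
      have hvr : t^[a] j = r := by rw [heq]; exact tdist_spec ht j
      rw [hvr]
      rw [reverseTree_apply_not_mem ht' r, if_pos rfl, h1]
      intro k hk hkeq
      rw [hm] at hk
      rw [hiter (k+1) (by omega)] at hkeq
      have := tdist_inj ht j (tdist ht j - (k+1)) (by omega) (tdist ht j)
        le_rfl (by rw [hkeq, tdist_spec ht j])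
      omega
    · -- a < tdist ht j
      set m := tdist ht j with hmdef
      have hk1 : m - 1 - a < tdist ht' r := by omega
      have hval : (reverseTree t r j)^[(m - 1 - a) + 1] r = t^[a] j := by
        rw [hiter (m - 1 - a + 1) (by omega)]
        congr 1
        omega
      have := reverseTree_apply_mem ht' r hk1
      rw [hval] at this
      rw [this, hiter (m - 1 - a) (by omega)]
      have h3 : m - (m - 1 - a) = a + 1 := by omega
      rw [h3, Function.iterate_succ_apply']
  · push_neg at hpath
    have hne : ∀ k < tdist ht' r, (reverseTree t r j)^[k+1] r ≠ v := by
      intro k hk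
      rw [hm] at hk
      rw [hiter (k+1) (by omega)]
      exact hpath _ (by omega)
    rw [reverseTree_apply_not_mem ht' r hne]
    have hvr : v ≠ r := by
      intro hvr
      exact hpath (tdist ht j) le_rfl (by rw [tdist_spec ht j, hvr])
    rw [if_neg hvr]
    have hvj : v ≠ j := by
      intro hvj
      exact hpath 0 (by omega) (by rw [hvj]; rfl)
    rw [reverseTree_apply_not_mem ht j (fun k hk => hpath (k+1) (by omega)), if_neg hvj]

lemma treeWeight_reverseTree (ℓ : Fin n → Fin n → ℝ)
    (h : IsSpanningTree ℓ r t) (j : Fin n) :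
    treeWeight ℓ j (reverseTree t r j) * pathWeight ℓ (treePath t r j)
      = treeWeight ℓ r t * pathWeight ℓ (treePath t r j).reverse := by
  obtain ⟨h1, h2, ht⟩ := h
  set m := tdist ht j with hmdef
  set u : ℕ → Fin n := fun k => t^[k] j with hudef
  set S : Finset (Fin n) := (Finset.range (m+1)).image u with hSdef
  have hinj : ∀ a ≤ m, ∀ b ≤ m, u a = u b → a = b := fun a ha b hb =>
    tdist_inj ht j a ha b hb
  have hjS : j ∈ S := Finset.mem_image.mpr ⟨0, by simp, rfl⟩
  have hrS : r ∈ S := Finset.mem_image.mpr ⟨m, by simp, tdist_spec ht j⟩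
  -- splitting helper
  have hsplit : ∀ (x : Fin n) (f : Fin n → ℝ), x ∈ S →
      ∏ v ∈ Finset.univ.filter (· ≠ x), f v
        = (∏ v ∈ Finset.univ \ S, f v) * ∏ v ∈ S.erase x, f v := by
    intro x f hx
    rw [Finset.filter_ne']
    have hsub : S.erase x ⊆ Finset.univ.erase x := by
      intro a ha
      simp at ha ⊢
      exact ha.1
    have hset : Finset.univ.erase x \ S.erase x = Finset.univ \ S := by
      ext a
      have hax : a = x → a ∈ S := fun h => h ▸ hx
      simp only [Finset.mem_sdiff, Finset.mem_erase, Finset.mem_univ, true_and, and_true]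
      tauto
    rw [← Finset.prod_sdiff hsub, hset]
  -- path weights
  have hp : pathWeight ℓ (treePath t r j) = ∏ k ∈ Finset.range m, ℓ (u k) (u (k+1)) := by
    rw [treePath_eq ht j, pathWeight_map_range]
  have hprev : pathWeight ℓ (treePath t r j).reverse
      = ∏ k ∈ Finset.range m, ℓ (u (k+1)) (u k) := by
    rw [treePath_eq ht j, reverse_map_range, pathWeight_map_range]
    rw [← Finset.prod_range_reflect (fun k => ℓ (u (k+1)) (u k)) m]
    apply Finset.prod_congr rfl
    intro k hk
    simp at hk
    have e1 : m - k = m - 1 - k + 1 := by omega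
    have e2 : m - (k+1) = m - 1 - k := by omega
    rw [e1, e2]
  -- tree weights
  have hoff : ∀ v, v ∉ S → reverseTree t r j v = t v := by
    intro v hv
    have hvj : v ≠ j := fun hvj => hv (hvj ▸ hjS)
    rw [reverseTree_apply_not_mem ht j, if_neg hvj]
    intro k hk heq
    exact hv (heq ▸ Finset.mem_image.mpr ⟨k+1, by simp; omega, rfl⟩)
  have htw1 : treeWeight ℓ j (reverseTree t r j)
      = (∏ v ∈ Finset.univ \ S, ℓ v (t v)) * ∏ k ∈ Finset.range m, ℓ (u (k+1)) (u k) := by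
    rw [treeWeight, hsplit j _ hjS]
    congr 1
    · exact Finset.prod_congr rfl (fun v hv => by
        rw [hoff v (by simpa using (Finset.mem_sdiff.mp hv).2)])
    · have hSej : S.erase j = (Finset.Ico 1 (m+1)).image u := by
        ext y
        simp only [Finset.mem_erase, hSdef, Finset.mem_image, Finset.mem_range,
          Finset.mem_Ico]
        constructor
        · intro ⟨hyj, k, hk, hky⟩
          refine ⟨k, ⟨?_, hk⟩, hky⟩
          rcases Nat.eq_zero_or_pos k with h0 | h0
          · exfalso
            apply hyj
            rw [← hky, h0]
            rfl
          · omega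
        · intro ⟨k, ⟨hk1, hk2⟩, hky⟩
          refine ⟨?_, k, hk2, hky⟩
          intro hyj
          have : u k = u 0 := by rw [hky, hyj]; rfl
          have := hinj k (by omega) 0 (by omega) this
          omega
      rw [hSej, Finset.prod_image (fun a ha b hb hab =>
        hinj a (by simp at ha; omega) b (by simp at hb; omega) hab)]
      rw [Finset.prod_Ico_eq_prod_range]
      have : m + 1 - 1 = m := by omega
      rw [this]
      apply Finset.prod_congr rfl
      intro k hk
      have hadd : 1 + k = k + 1 := Nat.add_comm 1 k
      rw [hadd, reverseTree_apply_mem ht j (by simp at hk; omega)]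
  have htw2 : treeWeight ℓ r t
      = (∏ v ∈ Finset.univ \ S, ℓ v (t v)) * ∏ k ∈ Finset.range m, ℓ (u k) (u (k+1)) := by
    rw [treeWeight, hsplit r _ hrS]
    congr 1
    · have hSer : S.erase r = (Finset.range m).image u := by
        ext y
        simp only [Finset.mem_erase, hSdef, Finset.mem_image, Finset.mem_range]
        constructor
        · intro ⟨hyr, k, hk, hky⟩
          refine ⟨k, ?_, hky⟩
          rcases eq_or_lt_of_le (Nat.lt_succ_iff.mp hk) with heq | hlt
          · exact absurd (by rw [← hky, heq]; exact tdist_spec ht j) hyr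
          · exact hlt
        · intro ⟨k, hk, hky⟩
          refine ⟨?_, k, by omega, hky⟩
          intro hyr
          have : u k = u m := by rw [hky, hyr, ← tdist_spec ht j]
          have := hinj k (by omega) m le_rfl this
          omega
      rw [hSer, Finset.prod_image (fun a ha b hb hab =>
        hinj a (by simp at ha; omega) b (by simp at hb; omega) hab)]
      apply Finset.prod_congr rfl
      intro k hk
      congr 1
      exact (Function.iterate_succ_apply' t k j).symm
  rw [htw1, htw2, hp, hprev]
  ring

end ReverseTree
section Action

variable {n : ℕ}

lemma pathWeight_reverse_map_range (ℓ : Fin n → Fin n → ℝ) (N : ℕ) (u : ℕ → Fin n) :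
    pathWeight ℓ (((List.range (N+1)).map u).reverse)
      = ∏ k ∈ Finset.range N, ℓ (u (k+1)) (u k) := by
  rw [reverse_map_range, pathWeight_map_range]
  rw [← Finset.prod_range_reflect (fun k => ℓ (u (k+1)) (u k)) N]
  apply Finset.prod_congr rfl
  intro k hk
  simp at hk
  have e1 : N - k = N - 1 - k + 1 := by omega
  have e2 : N - (k+1) = N - 1 - k := by omega
  rw [e1, e2]

/-- Under the cycle condition, all paths between the same endpoints have equal action. -/
lemma action_eq_of_cycleCondition (ℓ : Fin n → Fin n → ℝ) (hrev : Reversible ℓ)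
    (hcc : CycleCondition ℓ) {N L : ℕ} (u g : ℕ → Fin n)
    (hu : ∀ k < N, 0 < ℓ (u k) (u (k+1))) (hg : ∀ k < L, 0 < ℓ (g k) (g (k+1)))
    (h0 : u 0 = g 0) (h1 : u N = g L) :
    ∑ k ∈ Finset.range N, Real.log (ℓ (u k) (u (k+1)) / ℓ (u (k+1)) (u k))
      = ∑ k ∈ Finset.range L, Real.log (ℓ (g k) (g (k+1)) / ℓ (g (k+1)) (g k)) := by
  set h : ℕ → Fin n := fun k => if k ≤ N then u k else g (L - (k - N)) with hdef
  have hhu : ∀ k ≤ N, h k = u k := fun k hk => by simp [hdef, hk]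
  have hhg : ∀ k, N ≤ k → k ≤ N + L → h k = g (L - (k - N)) := by
    intro k hk1 hk2
    rcases eq_or_lt_of_le hk1 with heq | hlt
    · subst heq
      simp [hdef, h1]
    · simp only [hdef]
      rw [if_neg (by omega)]
  have hchain : ((List.range (N + L + 1)).map h).Chain' (IsEdge ℓ) := by
    rw [chain'_map_range]
    intro k hk
    by_cases hkN : k < N
    · rw [hhu k (by omega), hhu (k+1) (by omega)]
      exact hu k hkN
    · rw [hhg k (by omega) (by omega), hhg (k+1) (by omega) (by omega)]
      have ha : L - (k + 1 - N) < L := by omega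
      have he : L - (k - N) = L - (k + 1 - N) + 1 := by omega
      rw [he]
      exact (hrev _ _).mp (hg _ ha)
  have hclosed : ((List.range (N + L + 1)).map h).head?
      = ((List.range (N + L + 1)).map h).getLast? := by
    rw [head?_map_range, getLast?_map_range]
    congr 1
    rcases Nat.eq_zero_or_pos L with hL | hL
    · rw [hhu 0 (by omega), hhu (N + L) (by omega), h0]
      have hNL : N + L = N := by omega
      rw [hNL, h1, hL]
    · rw [hhu 0 (by omega), hhg (N + L) (by omega) le_rfl, h0]
      congr 1
      omega
  have hact := hcc _ hchain hclosed
  rw [pathAction_map_range] at hact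
  rw [Finset.range_eq_Ico, ← Finset.sum_Ico_consecutive _ (Nat.zero_le N) (by omega : N ≤ N + L)] at hact
  have hfirst : ∑ k ∈ Finset.Ico 0 N, Real.log (ℓ (h k) (h (k+1)) / ℓ (h (k+1)) (h k))
      = ∑ k ∈ Finset.range N, Real.log (ℓ (u k) (u (k+1)) / ℓ (u (k+1)) (u k)) := by
    rw [← Finset.range_eq_Ico]
    apply Finset.sum_congr rfl
    intro k hk
    simp at hk
    rw [hhu k (by omega), hhu (k+1) (by omega)]
  have hsecond : ∑ k ∈ Finset.Ico N (N + L), Real.log (ℓ (h k) (h (k+1)) / ℓ (h (k+1)) (h k))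
      = - ∑ k ∈ Finset.range L, Real.log (ℓ (g k) (g (k+1)) / ℓ (g (k+1)) (g k)) := by
    rw [Finset.sum_Ico_eq_sum_range]
    have he : N + L - N = L := by omega
    rw [he, ← Finset.sum_neg_distrib]
    rw [← Finset.sum_range_reflect (fun k => -Real.log (ℓ (g k) (g (k+1)) / ℓ (g (k+1)) (g k))) L]
    apply Finset.sum_congr rfl
    intro k hk
    simp only [Finset.mem_range] at hk
    rw [hhg (N + k) (by omega) (by omega), hhg (N + k + 1) (by omega) (by omega)]
    have e1 : L - (N + k - N) = (L - 1 - k) + 1 := by omega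
    have e2 : L - (N + k + 1 - N) = L - 1 - k := by omega
    rw [e1, e2]
    set a := ℓ (g (L - 1 - k)) (g (L - 1 - k + 1)) with hadef
    set b := ℓ (g (L - 1 - k + 1)) (g (L - 1 - k)) with hbdef
    have hapos : 0 < a := hg _ (by omega)
    have hbpos : 0 < b := (hrev _ _).mp hapos
    rw [Real.log_div (ne_of_gt hbpos) (ne_of_gt hapos),
      Real.log_div (ne_of_gt hapos) (ne_of_gt hbpos)]
    ring
  rw [hfirst, hsecond] at hact
  linarith

end Action
/-- Equilibrium time-reversal symmetry of loop-erased path probabilities: under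
the cycle condition, `Pr(Γ) = Pr(Γ̂)` for every minimal path `Γ` from `i` to
`j`, where `Γ̂` is the reversed path. -/
theorem equilibrium_time_reversal {n : ℕ} (ℓ : Fin n → Fin n → ℝ)
    (hℓ : ∀ i j, 0 ≤ ℓ i j) (hsc : StronglyConnected ℓ) (hrev : Reversible ℓ)
    (hcc : CycleCondition ℓ) (i j : Fin n) (Γ : List (Fin n))
    (hΓ : IsMinPathFrom ℓ i j Γ) :
    (∑ T ∈ (Trees ℓ j).filter (fun T => treePath T j i = Γ),
        treeWeight ℓ j T) / (∑ T ∈ Trees ℓ j, treeWeight ℓ j T) =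
      (∑ T' ∈ (Trees ℓ i).filter (fun T' => treePath T' i j = Γ.reverse),
          treeWeight ℓ i T') / (∑ T' ∈ Trees ℓ i, treeWeight ℓ i T') := by
  obtain ⟨⟨hchainΓ, hheadΓ, hlastΓ⟩, hnodup⟩ := hΓ
  have hΓne : Γ ≠ [] := by
    intro h
    rw [h] at hheadΓ
    simp at hheadΓ
  set L := Γ.length - 1 with hLdef
  have hΓlen : Γ.length = L + 1 := by
    have := List.length_pos_iff.mpr hΓne
    omega
  set g : ℕ → Fin n := fun k => Γ.getD k i with hgdef
  have hΓeq : Γ = (List.range (L+1)).map g := by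
    conv_lhs => rw [list_eq_map_range Γ i]
    rw [hΓlen]
  have hg0 : g 0 = i := by
    rw [hΓeq, head?_map_range] at hheadΓ
    exact Option.some_inj.mp hheadΓ
  have hgL : g L = j := by
    rw [hΓeq, getLast?_map_range] at hlastΓ
    exact Option.some_inj.mp hlastΓ
  have hgedge : ∀ k < L, 0 < ℓ (g k) (g (k+1)) := by
    rw [hΓeq, chain'_map_range] at hchainΓ
    exact hchainΓ
  have hgedge' : ∀ k < L, 0 < ℓ (g (k+1)) (g k) := fun k hk => (hrev _ _).mp (hgedge k hk)
  have hwΓ : pathWeight ℓ Γ = ∏ k ∈ Finset.range L, ℓ (g k) (g (k+1)) := by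
    rw [hΓeq, pathWeight_map_range]
  have hwΓrev : pathWeight ℓ Γ.reverse = ∏ k ∈ Finset.range L, ℓ (g (k+1)) (g k) := by
    rw [hΓeq, pathWeight_reverse_map_range]
  have hwΓpos : 0 < pathWeight ℓ Γ := by
    rw [hwΓ]
    exact Finset.prod_pos (fun k hk => hgedge k (Finset.mem_range.mp hk))
  have hwΓrevpos : 0 < pathWeight ℓ Γ.reverse := by
    rw [hwΓrev]
    exact Finset.prod_pos (fun k hk => hgedge' k (Finset.mem_range.mp hk))
  have hmemj : ∀ T, T ∈ Trees ℓ j ↔ IsSpanningTree ℓ j T := by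
    intro T
    simp [Trees]
  have hmemi : ∀ T, T ∈ Trees ℓ i ↔ IsSpanningTree ℓ i T := by
    intro T
    simp [Trees]
  -- key per-tree weight identity
  have hkey : ∀ T, IsSpanningTree ℓ j T →
      treeWeight ℓ i (reverseTree T j i) * pathWeight ℓ Γ
        = treeWeight ℓ j T * pathWeight ℓ Γ.reverse := by
    intro T hT
    obtain ⟨h1, h2, ht⟩ := hT
    set m := tdist ht i with hmdef
    set u : ℕ → Fin n := fun k => T^[k] i with hudef
    have hu : ∀ k < m, 0 < ℓ (u k) (u (k+1)) := by
      intro k hk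
      have hne := tdist_min ht i hk
      have := h2 _ hne
      rw [← Function.iterate_succ_apply' T k i] at this
      exact this
    have hu' : ∀ k < m, 0 < ℓ (u (k+1)) (u k) := fun k hk => (hrev _ _).mp (hu k hk)
    have hwp : pathWeight ℓ (treePath T j i)
        = ∏ k ∈ Finset.range m, ℓ (u k) (u (k+1)) := by
      rw [treePath_eq ht i, pathWeight_map_range]
    have hwprev : pathWeight ℓ (treePath T j i).reverse
        = ∏ k ∈ Finset.range m, ℓ (u (k+1)) (u k) := by
      rw [treePath_eq ht i, pathWeight_reverse_map_range]
    have hwppos : 0 < pathWeight ℓ (treePath T j i) := by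
      rw [hwp]
      exact Finset.prod_pos (fun k hk => hu k (Finset.mem_range.mp hk))
    have hwprevpos : 0 < pathWeight ℓ (treePath T j i).reverse := by
      rw [hwprev]
      exact Finset.prod_pos (fun k hk => hu' k (Finset.mem_range.mp hk))
    have haction := action_eq_of_cycleCondition ℓ hrev hcc u g hu hgedge
      (by rw [hg0]; rfl) (by rw [hgL]; exact tdist_spec ht i)
    have hexp := congrArg Real.exp haction
    rw [Real.exp_sum, Real.exp_sum] at hexp
    have he1 : ∏ k ∈ Finset.range m,
        Real.exp (Real.log (ℓ (u k) (u (k+1)) / ℓ (u (k+1)) (u k)))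
        = ∏ k ∈ Finset.range m, ℓ (u k) (u (k+1)) / ℓ (u (k+1)) (u k) :=
      Finset.prod_congr rfl (fun k hk => Real.exp_log
        (div_pos (hu k (Finset.mem_range.mp hk)) (hu' k (Finset.mem_range.mp hk))))
    have he2 : ∏ k ∈ Finset.range L,
        Real.exp (Real.log (ℓ (g k) (g (k+1)) / ℓ (g (k+1)) (g k)))
        = ∏ k ∈ Finset.range L, ℓ (g k) (g (k+1)) / ℓ (g (k+1)) (g k) :=
      Finset.prod_congr rfl (fun k hk => Real.exp_log
        (div_pos (hgedge k (Finset.mem_range.mp hk)) (hgedge' k (Finset.mem_range.mp hk))))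
    rw [he1, he2, Finset.prod_div_distrib, Finset.prod_div_distrib] at hexp
    have hcross : pathWeight ℓ (treePath T j i) * pathWeight ℓ Γ.reverse
        = pathWeight ℓ Γ * pathWeight ℓ (treePath T j i).reverse := by
      rw [hwp, hwprev, hwΓ, hwΓrev]
      rw [div_eq_div_iff (by rw [← hwprev]; exact ne_of_gt hwprevpos)
        (by rw [← hwΓrev]; exact ne_of_gt hwΓrevpos)] at hexp
      exact hexp
    have hF9 := treeWeight_reverseTree ℓ ⟨h1, h2, ht⟩ i
    have hwprevne : pathWeight ℓ (treePath T j i).reverse ≠ 0 := ne_of_gt hwprevpos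
    apply mul_right_cancel₀ hwprevne
    linear_combination pathWeight ℓ Γ.reverse * hF9
      - treeWeight ℓ i (reverseTree T j i) * hcross
  -- bijection on all trees
  have hbij1 : ∑ T ∈ Trees ℓ j, treeWeight ℓ j T * pathWeight ℓ Γ.reverse
      = ∑ T' ∈ Trees ℓ i, treeWeight ℓ i T' * pathWeight ℓ Γ := by
    apply Finset.sum_bij' (fun T _ => reverseTree T j i) (fun T' _ => reverseTree T' i j)
    · intro T hT
      exact (hmemi _).mpr (reverseTree_isSpanningTree ℓ hrev ((hmemj T).mp hT) i)
    · intro T' hT'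
      exact (hmemj _).mpr (reverseTree_isSpanningTree ℓ hrev ((hmemi T').mp hT') j)
    · intro T hT
      exact reverseTree_involution ℓ hrev ((hmemj T).mp hT) i
    · intro T' hT'
      exact reverseTree_involution ℓ hrev ((hmemi T').mp hT') j
    · intro T hT
      exact (hkey T ((hmemj T).mp hT)).symm
  -- bijection on filtered trees
  have hbij2 : ∑ T ∈ (Trees ℓ j).filter (fun T => treePath T j i = Γ),
        treeWeight ℓ j T * pathWeight ℓ Γ.reverse
      = ∑ T' ∈ (Trees ℓ i).filter (fun T' => treePath T' i j = Γ.reverse),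
        treeWeight ℓ i T' * pathWeight ℓ Γ := by
    apply Finset.sum_bij' (fun T _ => reverseTree T j i) (fun T' _ => reverseTree T' i j)
    · intro T hT
      rw [Finset.mem_filter] at hT ⊢
      obtain ⟨hT1, hT2⟩ := hT
      have hsp := (hmemj T).mp hT1
      refine ⟨(hmemi _).mpr (reverseTree_isSpanningTree ℓ hrev hsp i), ?_⟩
      have := treePath_reverseTree hsp.2.2 i
        (reverseTree_isSpanningTree ℓ hrev hsp i).2.2
      rw [this, hT2]
    · intro T' hT'
      rw [Finset.mem_filter] at hT' ⊢
      obtain ⟨hT1, hT2⟩ := hT'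
      have hsp := (hmemi T').mp hT1
      refine ⟨(hmemj _).mpr (reverseTree_isSpanningTree ℓ hrev hsp j), ?_⟩
      have := treePath_reverseTree hsp.2.2 j
        (reverseTree_isSpanningTree ℓ hrev hsp j).2.2
      rw [this, hT2, List.reverse_reverse]
    · intro T hT
      rw [Finset.mem_filter] at hT
      exact reverseTree_involution ℓ hrev ((hmemj T).mp hT.1) i
    · intro T' hT'
      rw [Finset.mem_filter] at hT'
      exact reverseTree_involution ℓ hrev ((hmemi T').mp hT'.1) j
    · intro T hT
      rw [Finset.mem_filter] at hT
      exact (hkey T ((hmemj T).mp hT.1)).symm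
  rw [← Finset.sum_mul, ← Finset.sum_mul] at hbij1 hbij2
  set SA := ∑ T ∈ (Trees ℓ j).filter (fun T => treePath T j i = Γ), treeWeight ℓ j T
  set Sj := ∑ T ∈ Trees ℓ j, treeWeight ℓ j T
  set SB := ∑ T' ∈ (Trees ℓ i).filter (fun T' => treePath T' i j = Γ.reverse),
    treeWeight ℓ i T'
  set Si := ∑ T' ∈ Trees ℓ i, treeWeight ℓ i T'
  have hc : pathWeight ℓ Γ.reverse / pathWeight ℓ Γ ≠ 0 :=
    ne_of_gt (div_pos hwΓrevpos hwΓpos)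
  have hSB : SB = SA * (pathWeight ℓ Γ.reverse / pathWeight ℓ Γ) := by
    field_simp
    linarith [hbij2]
  have hSi : Si = Sj * (pathWeight ℓ Γ.reverse / pathWeight ℓ Γ) := by
    field_simp
    linarith [hbij1]
  rw [hSB, hSi, mul_div_mul_right _ _ hc]
end
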